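/- Let N be a positive integer, let a, b be coprime integers, and let y be an integer with gcd(y, a*b*N) = 1. Then the vectors (a, y*b) and (y*a, b) lie in the same Gamma_0(N)-orbit; that is, there exist integers r, u, v, w with r*w - N*v*u = 1, r*a + u*(y*b) = y*a, and N*v*a + w*(y*b) = b. -/
import Mathlib

/-- Lemma 2.4(3): if `gcd(a, b) = 1` and `gcd(y, abN) = 1`, then `(a, yb)` and
`(ya, b)` lie in the same `Γ₀(N)`-orbit. -/
theorem cusp_equiv_mul (N : ℕ) (hN : 0 < N) (a b y : ℤ)
    (hab : IsCoprime a b) (hy : IsCoprime y (a * b * N)) :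
    ∃ r u v w : ℤ, r * w - (N : ℤ) * v * u = 1 ∧
      r * a + u * (y * b) = y * a ∧ (N : ℤ) * v * a + w * (y * b) = b := by
  obtain ⟨p, q, h⟩ := hy
  refine ⟨y * (2 - p * y), -(N : ℤ) * q * a ^ 2, b ^ 2 * q, p, ?_, ?_, ?_⟩
  · linear_combination (q * a * b * (N : ℤ) - p * y + 1) * h
  · linear_combination (-y * a) * h
  · linear_combination b * h
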